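/- For positive integers k, a, b such that k-1 ≤ b and b+k ≤ a, we have ∑_{i=1}^{k} (-1)^{i-1} · C(k, i) · C(a-i, b) = ∑_{i=1}^{k} C(a-i, b-i+1). -/

import Mathlib

private def Fsum (k n m : ℕ) : ℤ :=
  ∑ i ∈ Finset.range (k+1), (-1:ℤ)^i * (k.choose i) * ((n + (k - i)).choose m)

private lemma Fsum_succ (k n m : ℕ) : Fsum (k+1) n m = Fsum k (n+1) m - Fsum k n m := by
  unfold Fsum
  rw [Finset.sum_range_succ' (fun i => (-1:ℤ)^i * ((k+1).choose i) * ((n + (k + 1 - i)).choose m))]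
  have step : ∀ i, (-1:ℤ)^(i+1) * ((k+1).choose (i+1)) * ((n + (k + 1 - (i+1))).choose m)
      = -((-1:ℤ)^i * (k.choose i) * ((n + (k - i)).choose m))
        + (-1:ℤ)^(i+1) * (k.choose (i+1)) * ((n + (k - i)).choose m) := by
    intro i
    rw [Nat.choose_succ_succ]
    have : k + 1 - (i + 1) = k - i := by omega
    rw [this]
    push_cast
    ring
  rw [Finset.sum_congr rfl (fun i _ => step i), Finset.sum_add_distrib]
  have h2 : ∑ i ∈ Finset.range (k+1), (-1:ℤ)^(i+1) * (k.choose (i+1)) * ((n + (k - i)).choose m)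
      = (∑ i ∈ Finset.range (k+1), (-1:ℤ)^i * (k.choose i) * ((n + 1 + (k - i)).choose m))
        - ((n + 1 + k).choose m : ℤ) := by
    rw [Finset.sum_range_succ, Finset.sum_range_succ'
      (fun i => (-1:ℤ)^i * (k.choose i) * ((n + 1 + (k - i)).choose m))]
    simp only [Nat.choose_succ_self, Nat.cast_zero, mul_zero, zero_mul, add_zero,
      pow_zero, Nat.choose_zero_right, Nat.cast_one, one_mul, Nat.sub_zero]
    have : ∀ i ∈ Finset.range k, (-1:ℤ)^(i+1) * (k.choose (i+1)) * ((n + (k - i)).choose m)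
        = (-1:ℤ)^(i+1) * (k.choose (i+1)) * ((n + 1 + (k - (i+1))).choose m) := by
      intro i hi
      simp only [Finset.mem_range] at hi
      have e : n + (k - i) = n + 1 + (k - (i+1)) := by omega
      rw [e]
    rw [Finset.sum_congr rfl this]
    ring
  rw [h2, Finset.sum_neg_distrib]
  have e2 : n + (k + 1 - 0) = n + 1 + k := by omega
  rw [e2]
  push_cast
  simp only [Nat.choose_zero_right, Nat.cast_one, one_mul, mul_one]
  ring

private lemma Fsum_eval (k n m : ℕ) : Fsum k n m = if k ≤ m then ((n.choose (m - k)) : ℤ) else 0 := by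
  induction k generalizing n m with
  | zero => simp [Fsum]
  | succ k ih =>
    rw [Fsum_succ, ih, ih]
    by_cases h : k + 1 ≤ m
    · have hk : k ≤ m := by omega
      rw [if_pos h, if_pos hk, if_pos hk]
      have e : m - k = (m - (k+1)) + 1 := by omega
      rw [e, Nat.choose_succ_succ]
      push_cast; ring
    · rw [if_neg h]
      by_cases hk : k ≤ m
      · have : m = k := by omega
        subst this
        simp
      · simp [hk]

private lemma lhs_eval (k a b : ℕ) (hka : k ≤ a) :
    ∑ i ∈ Finset.Icc 1 k, ((-1:ℤ)^(i-1) * (k.choose i) * ((a-i).choose b))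
      = (a.choose b : ℤ) - Fsum k (a - k) b := by
  unfold Fsum
  rw [Finset.sum_range_succ' (fun i => (-1:ℤ)^i * (k.choose i) * ((a - k + (k - i)).choose b))]
  rw [show Finset.Icc 1 k = Finset.Ico 1 (k+1) from (Finset.Ico_add_one_right_eq_Icc ..).symm,
    Finset.sum_Ico_eq_sum_range]
  simp only [Nat.add_sub_cancel]
  have e0 : a - k + (k - 0) = a := by omega
  rw [e0]
  simp only [Nat.add_sub_cancel_left, pow_zero, Nat.choose_zero_right, Nat.cast_one, one_mul]
  have step : ∀ i ∈ Finset.range k,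
      (-1:ℤ)^i * (k.choose (1 + i)) * ((a - (1 + i)).choose b)
      = -((-1:ℤ)^(i+1) * (k.choose (i+1)) * ((a - k + (k - (i+1))).choose b)) := by
    intro i hi
    simp only [Finset.mem_range] at hi
    have e1 : a - k + (k - (i + 1)) = a - (1 + i) := by omega
    have e3 : 1 + i = i + 1 := by omega
    rw [e1, e3, pow_succ]
    ring
  rw [Finset.sum_congr rfl step, Finset.sum_neg_distrib]
  ring

private lemma rhs_eval (a b : ℕ) : ∀ k, k ≤ b → b + k ≤ a →
    ∑ i ∈ Finset.Icc 1 k, (((a - i).choose (b + 1 - i)) : ℤ)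
      = (a.choose b : ℤ) - ((a - k).choose (b - k) : ℤ) := by
  intro k
  induction k with
  | zero => simp
  | succ k ih =>
    intro hkb hka
    rw [Finset.sum_Icc_succ_top (by omega : 1 ≤ k+1), ih (by omega) (by omega)]
    have e1 : b + 1 - (k+1) = b - k := by omega
    rw [e1]
    have ea : a - k = (a - (k+1)) + 1 := by omega
    have eb : b - k = (b - (k+1)) + 1 := by omega
    have pascal : ((a-k).choose (b-k) : ℤ)
        = ((a-(k+1)).choose (b-(k+1)) : ℤ) + ((a-(k+1)).choose (b-k) : ℤ) := by
      rw [ea, eb, Nat.choose_succ_succ]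
      simp only [Nat.succ_eq_add_one, ← eb]
      push_cast; ring
    rw [eb] at pascal
    rw [eb]
    linarith [pascal]

theorem stmt_1 (k a b : ℕ) (hk : 0 < k) (ha : 0 < a) (hb : 0 < b)
    (h1 : k - 1 ≤ b) (h2 : b + k ≤ a) :
    ∑ i ∈ Finset.Icc 1 k, ((-1 : ℤ) ^ (i - 1) * (k.choose i) * ((a - i).choose b))
      = ∑ i ∈ Finset.Icc 1 k, (((a - i).choose (b + 1 - i) : ℤ)) := by
  rw [lhs_eval k a b (by omega), Fsum_eval]
  by_cases hkb : k ≤ b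
  · rw [if_pos hkb, rhs_eval a b k hkb h2]
  · have hkb1 : k = b + 1 := by omega
    rw [if_neg hkb]
    subst hkb1
    rw [Finset.sum_Icc_succ_top (by omega : 1 ≤ b+1), rhs_eval a b b le_rfl (by omega)]
    have e : b + 1 - (b + 1) = 0 := by omega
    rw [e]
    simp [Nat.sub_self]
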